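/- Let X ∈ 𝔇 be a Lie–Bäcklund differentiation with respect to 𝒟, i.e. ⁅Y, X⁆ ∈ 𝒟 for all Y ∈ 𝒟. Then for every p-Cartan form ω ∈ Ω^r (0 ≤ p ≤ r), the Lie derivative L_X ω is again a p-Cartan form in Ω^r. -/

import Mathlib

/-- The raw Cartan formula for the exterior differential: for an `r`-argument map
`ω : 𝔇^r → A` on the derivations `𝔇 = Der_𝔽(A)`, `cartanD ω : 𝔇^{r+1} → A` is
`dω(X_0,…,X_r) = (r+1)⁻¹ ( Σ_s (−1)^s X_s (ω(X_0,…,X̂_s,…,X_r))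
  + Σ_{s<t} (−1)^{s+t} ω(⁅X_s,X_t⁆, X_0,…,X̂_s,…,X̂_t,…,X_r) )`. -/
noncomputable def cartanD {𝔽 : Type*} [Field 𝔽] [CharZero 𝔽]
    {A : Type*} [CommRing A] [Algebra 𝔽 A] {r : ℕ}
    (ω : (Fin r → Derivation 𝔽 A A) → A) :
    (Fin (r + 1) → Derivation 𝔽 A A) → A :=
  fun X =>
    ((r + 1 : 𝔽))⁻¹ • (
      (∑ s : Fin (r + 1), (-1 : A) ^ (s : ℕ) * X s (ω (s.removeNth X))) +
      ∑ s : Fin (r + 1), ∑ t : Fin (r + 1),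
        if s < t then
          (-1 : A) ^ ((s : ℕ) + (t : ℕ)) *
            ω (fun u : Fin r =>
              if (u : ℕ) = 0 then ⁅X s, X t⁆
              else X ⟨if (u : ℕ) - 1 < (s : ℕ) then (u : ℕ) - 1
                      else if (u : ℕ) < (t : ℕ) then (u : ℕ) else (u : ℕ) + 1,
                      by have h1 := u.isLt; split
                         · omega
                         · split <;> omega⟩)
        else 0)

/-- The interior product `i_X ω (X_1,…,X_{r-1}) = r · ω(X, X_1,…,X_{r-1})` (raw form). -/
def iProdRaw {𝔽 : Type*} [Field 𝔽] [CharZero 𝔽]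
    {A : Type*} [CommRing A] [Algebra 𝔽 A] {r : ℕ}
    (X : Derivation 𝔽 A A) (ω : (Fin r → Derivation 𝔽 A A) → A) :
    (Fin (r - 1) → Derivation 𝔽 A A) → A :=
  fun Y => (r : A) * ω (fun u => if h : (u : ℕ) = 0 then X
    else Y ⟨(u : ℕ) - 1, by have h1 := u.isLt; omega⟩)

/-- The Lie derivative
`L_X ω (X_1,…,X_r) = X (ω (X_1,…,X_r)) − Σ_s ω(X_1,…,⁅X,X_s⁆,…,X_r)` (raw form). -/
def lieDerivRaw {𝔽 : Type*} [Field 𝔽] [CharZero 𝔽]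
    {A : Type*} [CommRing A] [Algebra 𝔽 A] {r : ℕ}
    (X : Derivation 𝔽 A A) (ω : (Fin r → Derivation 𝔽 A A) → A) :
    (Fin r → Derivation 𝔽 A A) → A :=
  fun Y => X (ω Y) - ∑ s : Fin r, ω (Function.update Y s ⁅X, Y s⁆)

/-- `ω : 𝔇^r → A` is a `p`-Cartan form (w.r.t. the Cartan subalgebra `𝒟`) if
`ω(X_1,…,X_r) = 0` whenever at least `r - p + 1` of the arguments belong to `𝒟`. -/
def IsPCartan {𝔽 : Type*} [Field 𝔽] [CharZero 𝔽]
    {A : Type*} [CommRing A] [Algebra 𝔽 A] {r : ℕ}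
    (𝒟 : Submodule A (Derivation 𝔽 A A)) (p : ℕ)
    (ω : (Fin r → Derivation 𝔽 A A) → A) : Prop :=
  ∀ (Y : Fin r → Derivation 𝔽 A A) (S : Finset (Fin r)),
    r - p + 1 ≤ S.card → (∀ s ∈ S, Y s ∈ 𝒟) → ω Y = 0

section Aux

variable {𝔽 : Type*} [Field 𝔽] [CharZero 𝔽]
    {A : Type*} [CommRing A] [Algebra 𝔽 A] {r : ℕ}

lemma lie_smul_der (X y : Derivation 𝔽 A A) (a : A) :
    ⁅X, a • y⁆ = a • ⁅X, y⁆ + X a • y := by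
  ext f
  simp [Derivation.commutator_apply, Derivation.leibniz, smul_eq_mul]

lemma lieDerivRaw_update (X : Derivation 𝔽 A A)
    (ω : AlternatingMap A (Derivation 𝔽 A A) A (Fin r))
    (Y : Fin r → Derivation 𝔽 A A) (i : Fin r) (v : Derivation 𝔽 A A) :
    lieDerivRaw X (⇑ω) (Function.update Y i v)
      = X (ω (Function.update Y i v)) - ω (Function.update Y i ⁅X, v⁆)
        - ∑ s ∈ Finset.univ.erase i,
            ω (Function.update (Function.update Y s ⁅X, Y s⁆) i v) := by
  unfold lieDerivRaw
  rw [← Finset.add_sum_erase _ _ (Finset.mem_univ i)]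
  have h1 : Function.update (Function.update Y i v) i ⁅X, Function.update Y i v i⁆
      = Function.update Y i ⁅X, v⁆ := by
    rw [Function.update_self, Function.update_idem]
  have h2 : ∀ s ∈ Finset.univ.erase i,
      ω (Function.update (Function.update Y i v) s ⁅X, Function.update Y i v s⁆)
        = ω (Function.update (Function.update Y s ⁅X, Y s⁆) i v) := by
    intro s hs
    have hsi : s ≠ i := Finset.ne_of_mem_erase hs
    rw [Function.update_of_ne hsi, Function.update_comm hsi]
  rw [h1, Finset.sum_congr rfl h2]
  ring

/-- The Lie derivative of an alternating map, as an alternating map. -/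
def lieDerivAlt (X : Derivation 𝔽 A A)
    (ω : AlternatingMap A (Derivation 𝔽 A A) A (Fin r)) :
    AlternatingMap A (Derivation 𝔽 A A) A (Fin r) where
  toMultilinearMap :=
  { toFun := lieDerivRaw X (⇑ω)
    map_update_add' := by
      intro inst Y i y z
      have h := Subsingleton.elim inst (instDecidableEqFin r)
      subst h
      simp only [lieDerivRaw_update, ω.map_update_add, map_add, lie_add, Finset.sum_add_distrib]
      ring
    map_update_smul' := by
      intro inst Y i a y
      have h := Subsingleton.elim inst (instDecidableEqFin r)
      subst h
      simp only [lieDerivRaw_update, ω.map_update_smul, lie_smul_der, ω.map_update_add, smul_eq_mul,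
        Derivation.leibniz, Finset.mul_sum, Finset.sum_add_distrib]
      rw [mul_sub, mul_sub, Finset.mul_sum]
      ring }
  map_eq_zero_of_eq' := by
    intro Y i j hYij hij
    show X (ω Y) - ∑ s : Fin r, ω (Function.update Y s ⁅X, Y s⁆) = 0
    rw [ω.map_eq_zero_of_eq Y hYij hij, map_zero]
    have hsub : ({i, j} : Finset (Fin r)) ⊆ Finset.univ := Finset.subset_univ _
    rw [← Finset.sum_subset hsub (by
      intro s _ hs
      simp only [Finset.mem_insert, Finset.mem_singleton, not_or] at hs
      exact ω.map_eq_zero_of_eq _ (by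
        rw [Function.update_of_ne (Ne.symm hs.1), Function.update_of_ne (Ne.symm hs.2)]
        exact hYij) hij)]
    rw [Finset.sum_pair hij]
    have key : Function.update Y i ⁅X, Y i⁆
        = (Function.update Y j ⁅X, Y j⁆) ∘ Equiv.swap i j := by
      funext k
      simp only [Function.comp_apply]
      by_cases hk : k = i
      · subst hk
        rw [Equiv.swap_apply_left, Function.update_self, Function.update_self, hYij]
      · by_cases hk' : k = j
        · subst hk'
          rw [Equiv.swap_apply_right, Function.update_of_ne (Ne.symm hij),
            Function.update_of_ne hij]
          exact hYij.symm
        · rw [Equiv.swap_apply_of_ne_of_ne hk hk', Function.update_of_ne hk,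
            Function.update_of_ne hk']
    rw [key, ω.map_swap _ hij]
    ring

lemma lieDerivAlt_coe (X : Derivation 𝔽 A A)
    (ω : AlternatingMap A (Derivation 𝔽 A A) A (Fin r)) :
    ⇑(lieDerivAlt X ω) = lieDerivRaw X (⇑ω) := rfl

end Aux

/-- Let `𝒟 ⊆ 𝔇` be an `A`-submodule closed under the bracket and let
`X ∈ 𝔇` be a Lie–Bäcklund differentiation with respect to `𝒟`, i.e. `⁅Y, X⁆ ∈ 𝒟` for all
`Y ∈ 𝒟`. Then for every `p`-Cartan form `ω ∈ Ω^r` (`0 ≤ p ≤ r`), the Lie derivative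
`L_X ω` is again a `p`-Cartan form in `Ω^r`. -/
theorem lieDeriv_lieBacklund_preserves_cartan {𝔽 : Type*} [Field 𝔽] [CharZero 𝔽]
    {A : Type*} [CommRing A] [Algebra 𝔽 A]
    (𝒟 : Submodule A (Derivation 𝔽 A A))
    (h𝒟 : ∀ X ∈ 𝒟, ∀ Y ∈ 𝒟, ⁅X, Y⁆ ∈ 𝒟)
    (X : Derivation 𝔽 A A) (hX : ∀ Y ∈ 𝒟, ⁅Y, X⁆ ∈ 𝒟)
    (r p : ℕ) (hpr : p ≤ r)
    (ω : AlternatingMap A (Derivation 𝔽 A A) A (Fin r))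
    (hω : IsPCartan 𝒟 p (⇑ω)) :
    (∃ η : AlternatingMap A (Derivation 𝔽 A A) A (Fin r), ⇑η = lieDerivRaw X (⇑ω)) ∧
      IsPCartan 𝒟 p (lieDerivRaw X (⇑ω)) := by
  refine ⟨⟨lieDerivAlt X ω, lieDerivAlt_coe X ω⟩, ?_⟩
  intro Y S hcard hS
  unfold lieDerivRaw
  rw [hω Y S hcard hS, map_zero]
  rw [Finset.sum_eq_zero, sub_zero]
  intro s _
  refine hω _ S hcard ?_
  intro t ht
  by_cases hts : t = s
  · subst hts
    rw [Function.update_self]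
    have : ⁅Y t, X⁆ ∈ 𝒟 := hX _ (hS t ht)
    have h2 : ⁅X, Y t⁆ = -⁅Y t, X⁆ := (lie_skew _ _).symm
    rw [h2]
    exact 𝒟.neg_mem this
  · rw [Function.update_of_ne hts]
    exact hS t ht
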